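/- Let J be a join over attributes ALL, B_S ⊆ ALL nonempty, and D the two-tuple database built from tuples t1 (value 1 on B_S, 0 elsewhere) and t2 (all 0) by projection onto each relation's schema. For any subjoin J' of J, let J'_p be the partial join obtained by restricting every schema of J' to B_S (dropping empty schemas), and D_E the corresponding restriction of D. Then a tuple t over the attributes of J'_p is in J'_p(D_E) if and only if the tuple extending t with value 0 on all remaining attributes of J' is in J'(D). -/
import Mathlib


/-- A tuple `t` agrees with tuple `u` on the attribute set `S`. -/
def Agrees {α V : Type} (S : Set α) (t u : α → V) : Prop := ∀ a ∈ S, t a = u a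

/-- The output of the natural join of the relations `R i` with schemas `sch i`. -/
def JoinOut {ι α V : Type} (sch : ι → Set α) (R : ι → Set (α → V)) : Set (α → V) :=
  { t | ∀ i, ∃ u ∈ R i, Agrees (sch i) t u }

/-- The output of the join of the subfamily of relations indexed by `K`. -/
def SubJoinOut {ι α V : Type} (sch : ι → Set α) (R : ι → Set (α → V)) (K : Set ι) :
    Set (α → V) :=
  { t | ∀ i ∈ K, ∃ u ∈ R i, Agrees (sch i) t u }

/-- A database is fully reduced if every tuple of every relation is the projection of
some tuple in the full join output. -/
def FullyReduced {ι α V : Type} (sch : ι → Set α) (R : ι → Set (α → V)) : Prop :=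
  ∀ i, ∀ u ∈ R i, ∃ t ∈ JoinOut sch R, Agrees (sch i) t u

/-- The boundary attributes of the subjoin indexed by `K`: attributes occurring both in
some relation of the subjoin and in some relation outside it. -/
def Boundary {ι α : Type} (sch : ι → Set α) (K : Set ι) : Set α :=
  (⋃ i ∈ K, sch i) ∩ (⋃ i ∈ Kᶜ, sch i)

/-- `G` is a join tree (parse tree) of the join with relation schemas `sch`. -/
def IsJoinTree {ι α : Type} (G : SimpleGraph ι) (sch : ι → Set α) : Prop :=
  G.IsTree ∧ ∀ a : α, ∀ i j : ι, a ∈ sch i → a ∈ sch j →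
    ∃ p : G.Walk i j, ∀ k ∈ p.support, a ∈ sch k

/-- The node set `K` induces a connected subtree of `G`. -/
def ConnectedIn {ι : Type} (G : SimpleGraph ι) (K : Set ι) : Prop :=
  ∀ i ∈ K, ∀ j ∈ K, ∃ p : G.Walk i j, ∀ k ∈ p.support, k ∈ K

open Classical in
/-- Partial join lemma: with the two-tuple database `R` built from `t1` (true exactly
on `BS`) and `t2` (all false), and its restriction `Rp` to the partial schemas
`sch i ∩ BS`, a tuple `t` is in the partial join iff the tuple obtained from `t` by
setting all attributes outside `BS` to `false` (i.e. to the common value of `t1` and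
`t2` there) is in the full join of the subjoin's relations. -/
theorem stmt8 {ι α : Type} (sch : ι → Set α) (BS : Set α) (hBS : BS.Nonempty)
    (t1 t2 : α → Bool)
    (ht1 : ∀ a, t1 a = true ↔ a ∈ BS)
    (ht2 : ∀ a, t2 a = false)
    (R : ι → Set (α → Bool))
    (hR : ∀ i, R i = {u | Agrees (sch i) u t1 ∨ Agrees (sch i) u t2})
    (Rp : ι → Set (α → Bool))
    (hRp : ∀ i, Rp i = {u | Agrees (sch i ∩ BS) u t1 ∨ Agrees (sch i ∩ BS) u t2}) :
    ∀ t : α → Bool,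
      t ∈ JoinOut (fun i => sch i ∩ BS) Rp ↔
        (fun a => if a ∈ BS then t a else false) ∈ JoinOut sch R := by
  intro t
  constructor
  · intro h i
    obtain ⟨u, hu, hagree⟩ := h i
    rw [hRp] at hu
    rcases hu with hu | hu
    · refine ⟨fun a => if a ∈ BS then t1 a else false, ?_, ?_⟩
      · rw [hR]
        left
        intro a _
        by_cases hb : a ∈ BS
        · simp [hb]
        · simp [hb]
          have := (ht1 a).not
          simp [hb] at this
          simp [this]
      · intro a ha
        by_cases hb : a ∈ BS
        · simp only [hb, if_true]
          have := hagree a ⟨ha, hb⟩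
          rw [this, hu a ⟨ha, hb⟩]
        · simp [hb]
    · refine ⟨t2, ?_, ?_⟩
      · rw [hR]; right; intro a _; rfl
      · intro a ha
        by_cases hb : a ∈ BS
        · simp only [hb, if_true]
          rw [hagree a ⟨ha, hb⟩, hu a ⟨ha, hb⟩]
        · simp [hb, ht2 a]
  · intro h i
    obtain ⟨u, hu, hagree⟩ := h i
    rw [hR] at hu
    refine ⟨u, ?_, ?_⟩
    · rw [hRp]
      rcases hu with hu | hu
      · left; intro a ha; exact hu a ha.1
      · right; intro a ha; exact hu a ha.1
    · intro a ha
      have := hagree a ha.1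
      simpa [ha.2] using this
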